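/- For coprime integers m, n, the intersection K_{m,n} ∩ K_{2,−2} inside T² = U(1)×U(1) is a cyclic group of order 2|m+n|, provided m + n ≠ 0. -/

import Mathlib

noncomputable section

open scoped ComplexConjugate

/-- The character `(z, w) ↦ zᵐ wⁿ` of the torus `T² = U(1) × U(1)`. -/
def torusChar (m n : ℤ) : Circle × Circle →* Circle where
  toFun p := p.1 ^ m * p.2 ^ n
  map_one' := by simp
  map_mul' a b := by
    simp only [Prod.fst_mul, Prod.snd_mul, mul_zpow]
    exact mul_mul_mul_comm _ _ _ _

/-- The subgroup `K_{m,n} = {(e^{iθ₁}, e^{iθ₂}) ∈ T² : e^{i(mθ₁+nθ₂)} = 1}` of the maximal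
torus `T²` of `SU(2) × SU(2)`. -/
def Kmn (m n : ℤ) : Subgroup (Circle × Circle) := (torusChar m n).ker

open Real

lemma circle_exp_zpow (x : ℝ) (j : ℤ) : Circle.exp x ^ j = Circle.exp (j * x) := by
  have h := map_zsmul Circle.expHom j x
  simpa [zsmul_eq_mul] using h.symm

lemma detz (z w : Circle) (p q r s : ℤ) (h1 : z ^ p * w ^ q = 1) (h2 : z ^ r * w ^ s = 1) :
    z ^ (p * s - r * q) = 1 := by
  have e1 : z ^ (p * s) * w ^ (q * s) = 1 := by
    rw [zpow_mul, zpow_mul, ← mul_zpow, h1, one_zpow]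
  have e2 : z ^ (r * q) * w ^ (s * q) = 1 := by
    rw [zpow_mul, zpow_mul, ← mul_zpow, h2, one_zpow]
  rw [mul_comm s q] at e2
  have e3 : z ^ (p * s) = z ^ (r * q) := mul_right_cancel (e1.trans e2.symm)
  rw [zpow_sub, e3]
  simp

lemma E_eq_one {k : ℤ} (hk : k ≠ 0) (j : ℤ) :
    Circle.exp ((j : ℝ) * (π / (k : ℝ))) = 1 ↔ 2 * k ∣ j := by
  have hkR : (k : ℝ) ≠ 0 := Int.cast_ne_zero.mpr hk
  have hne : (π / (k : ℝ)) ≠ 0 := div_ne_zero Real.pi_ne_zero hkR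
  rw [Circle.exp_eq_one]
  constructor
  · rintro ⟨t, ht⟩
    refine ⟨t, ?_⟩
    have h2 : (t : ℝ) * (2 * π) = ((2 * k * t : ℤ) : ℝ) * (π / (k : ℝ)) := by
      push_cast
      field_simp
    rw [h2] at ht
    have := mul_right_cancel₀ hne ht
    exact_mod_cast this
  · rintro ⟨t, rfl⟩
    refine ⟨t, ?_⟩
    push_cast
    field_simp

/-- For coprime integers `m, n` with `m + n ≠ 0`, the intersection `K_{m,n} ∩ K_{2,−2}`
inside `T² = U(1) × U(1)` is a cyclic group of order `2|m+n|`. -/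
theorem Kmn_inter_K2neg2_cyclic (m n : ℤ) (hco : IsCoprime m n) (hsum : m + n ≠ 0) :
    IsCyclic ↥(Kmn m n ⊓ Kmn 2 (-2)) ∧
      Nat.card ↥(Kmn m n ⊓ Kmn 2 (-2)) = 2 * (m + n).natAbs := by
  set k : ℤ := m + n with hkdef
  set N : ℕ := 2 * k.natAbs with hNdef
  have hN0 : N ≠ 0 := by
    simp [hNdef, Int.natAbs_eq_zero, hsum]
  haveI : NeZero N := ⟨hN0⟩
  have hNabs : ((2 * k).natAbs : ℕ) = N := by
    rw [Int.natAbs_mul]; rfl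
  -- Bezout coefficients with a * n - b * m = 1
  obtain ⟨u, v, huv⟩ := id hco
  set a : ℤ := v with hadef
  set b : ℤ := -u with hbdef
  have hab : a * n - b * m = 1 := by
    simp only [hadef, hbdef]; linarith [huv]
  set G : Subgroup (Circle × Circle) := Kmn m n ⊓ Kmn 2 (-2) with hGdef
  -- membership facts
  have hmemG : ∀ x : Circle × Circle, x ∈ G ↔
      (x.1 ^ m * x.2 ^ n = 1 ∧ x.1 ^ (2:ℤ) * x.2 ^ (-2:ℤ) = 1) := by
    intro x
    simp only [hGdef, Subgroup.mem_inf, Kmn, MonoidHom.mem_ker]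
    rfl
  -- every element of G is killed by 2k on each component
  have hkill : ∀ x : Circle × Circle, x ∈ G → x.1 ^ (2*k) = 1 ∧ x.2 ^ (2*k) = 1 := by
    intro x hx
    obtain ⟨h1, h2⟩ := (hmemG x).mp hx
    have hz : x.1 ^ (m * (-2) - 2 * n) = 1 := detz _ _ m n 2 (-2) h1 h2
    have hw : x.2 ^ (n * 2 - (-2) * m) = 1 := by
      rw [mul_comm] at h1 h2
      exact detz _ _ n m (-2) 2 h1 h2
    constructor
    · have h3 : x.1 ^ (-(2*k)) = 1 := by
        rw [show -(2*k) = m * (-2) - 2 * n by rw [hkdef]; ring]; exact hz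
      rw [zpow_neg, inv_eq_one] at h3; exact h3
    · rw [show (2*k : ℤ) = n * 2 - (-2) * m by rw [hkdef]; ring]; exact hw
  -- the character z^a w^b is injective on G
  have hinj : ∀ x y : ↥G,
      torusChar a b (x : Circle × Circle) = torusChar a b (y : Circle × Circle) → x = y := by
    intro x y hxy
    set p : Circle × Circle := (x : Circle × Circle) * (y : Circle × Circle)⁻¹ with hpdef
    have hpG : p ∈ G := G.mul_mem x.2 (G.inv_mem y.2)
    have hp1 : p.1 ^ m * p.2 ^ n = 1 := ((hmemG p).mp hpG).1
    have hpab : p.1 ^ a * p.2 ^ b = 1 := by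
      have : torusChar a b p = 1 := by
        rw [hpdef, map_mul, map_inv, hxy, mul_inv_cancel]
      exact this
    have hz : p.1 ^ (m * b - a * n) = 1 := detz _ _ m n a b hp1 hpab
    have hw : p.2 ^ (n * a - b * m) = 1 := by
      rw [mul_comm] at hp1 hpab
      exact detz _ _ n m b a hp1 hpab
    have hz1 : p.1 = 1 := by
      have h4 : p.1 ^ (-1 : ℤ) = 1 := by
        rw [show (-1 : ℤ) = m * b - a * n by linarith [hab]]; exact hz
      rwa [zpow_neg, zpow_one, inv_eq_one] at h4
    have hw1 : p.2 = 1 := by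
      have h5 : p.2 ^ (1 : ℤ) = 1 := by
        rw [show (1 : ℤ) = n * a - b * m by linarith [hab]]; exact hw
      rwa [zpow_one] at h5
    have hp1' : p = 1 := Prod.ext hz1 hw1
    exact Subtype.ext (mul_inv_eq_one.mp hp1')
  -- injection into roots of unity
  have hrootmem : ∀ x : ↥G,
      Circle.toUnits (torusChar a b (x : Circle × Circle)) ∈ rootsOfUnity N ℂ := by
    intro x
    rw [mem_rootsOfUnity]
    have hk2 := hkill _ x.2
    set z : Circle := (x : Circle × Circle).1 with hzdef
    set w : Circle := (x : Circle × Circle).2 with hwdef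
    have hchar : (torusChar a b (x : Circle × Circle)) ^ (2 * k) = 1 := by
      show (z ^ a * w ^ b) ^ (2*k) = 1
      rw [mul_zpow, ← zpow_mul z a (2*k), ← zpow_mul w b (2*k),
        mul_comm a (2*k), mul_comm b (2*k), zpow_mul z (2*k) a, zpow_mul w (2*k) b,
        hk2.1, hk2.2, one_zpow, one_zpow, one_mul]
    have hcharN : (torusChar a b (x : Circle × Circle)) ^ ((N : ℤ)) = 1 := by
      rcases Int.natAbs_eq (2 * k) with h | h
      · rw [← hNabs, ← h]; exact hchar
      · rw [← hNabs, show ((((2*k).natAbs : ℤ))) = -(2*k) by omega, zpow_neg, hchar, inv_one]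
    have h6 : Circle.toUnits ((torusChar a b (x : Circle × Circle)) ^ (N : ℤ)) = 1 := by
      rw [hcharN, map_one]
    rw [map_zpow] at h6
    rw [← zpow_natCast]
    exact h6
  set Φ : ↥G → rootsOfUnity N ℂ :=
    fun x => ⟨Circle.toUnits (torusChar a b (x : Circle × Circle)), hrootmem x⟩ with hΦdef
  have htoUnits_inj : Function.Injective Circle.toUnits := by
    intro z w h
    apply Circle.ext
    have := congrArg Units.val h
    simpa using this
  have hΦinj : Function.Injective Φ := by
    intro x y hxy
    exact hinj x y (htoUnits_inj (Subtype.ext_iff.mp hxy))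
  haveI hGfin : Finite ↥G := Finite.of_injective Φ hΦinj
  -- cardinality upper bound
  have hcard_le : Nat.card ↥G ≤ N := by
    have h7 := Nat.card_le_card_of_injective Φ hΦinj
    have h8 : Nat.card ↥(rootsOfUnity N ℂ) = N := by
      exact Complex.card_rootsOfUnity N
    omega
  -- the generator
  set E : ℤ → Circle := fun j => Circle.exp ((j : ℝ) * (π / (k : ℝ))) with hEdef
  have hEpow : ∀ (c j : ℤ), E c ^ j = E (j * c) := by
    intro c j
    rw [hEdef]
    simp only
    rw [circle_exp_zpow]
    push_cast
    ring_nf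
  have hE1 : ∀ j : ℤ, E j = 1 ↔ 2 * k ∣ j := fun j => E_eq_one hsum j
  have hodd : Odd m ∨ Odd n := by
    by_contra hcon
    push_neg at hcon
    rw [Int.not_odd_iff_even, Int.not_odd_iff_even] at hcon
    have h2 : IsUnit (2 : ℤ) := hco.isUnit_of_dvd' hcon.1.two_dvd hcon.2.two_dvd
    rw [Int.isUnit_iff] at h2
    omega
  obtain ⟨c, d, hc1, hc2, hcd⟩ :
      ∃ c d : ℤ, 2 * k ∣ m * c + n * d ∧ 2 * k ∣ 2 * c + (-2) * d ∧ (c = 1 ∨ d = 1) := by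
    rcases hodd with hm | hn
    · obtain ⟨t, ht⟩ := hm
      exact ⟨k + 1, 1, ⟨t + 1, by rw [hkdef, ht]; ring⟩, ⟨1, by ring⟩, Or.inr rfl⟩
    · obtain ⟨t, ht⟩ := hn
      exact ⟨1, k + 1, ⟨t + 1, by rw [hkdef, ht]; ring⟩, ⟨-1, by ring⟩, Or.inl rfl⟩
  set g : Circle × Circle := (E c, E d) with hgdef
  have hgG : g ∈ G := by
    rw [hmemG]
    constructor
    · show E c ^ m * E d ^ n = 1
      rw [hEpow, hEpow, hEdef]
      simp only
      rw [← Circle.exp_add, ← add_mul]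
      rw [show ((m * c : ℤ) : ℝ) + ((n * d : ℤ) : ℝ) = (((m * c + n * d : ℤ)) : ℝ) by push_cast; ring]
      exact (hE1 _).mpr hc1
    · show E c ^ (2:ℤ) * E d ^ (-2:ℤ) = 1
      rw [hEpow, hEpow, hEdef]
      simp only
      rw [← Circle.exp_add, ← add_mul]
      rw [show (((2:ℤ) * c : ℤ) : ℝ) + (((-2:ℤ) * d : ℤ) : ℝ) = (((2 * c + (-2) * d : ℤ)) : ℝ) by push_cast; ring]
      exact (hE1 _).mpr hc2
  have hgpow : ∀ j : ℤ, g ^ j = 1 ↔ 2 * k ∣ j := by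
    intro j
    constructor
    · intro hj
      have h1 : (g ^ j).1 = 1 := by rw [hj]; rfl
      have h2 : (g ^ j).2 = 1 := by rw [hj]; rfl
      have hgj1 : E c ^ j = 1 := h1
      have hgj2 : E d ^ j = 1 := h2
      rcases hcd with rfl | rfl
      · rw [hEpow, mul_one] at hgj1
        exact (hE1 j).mp hgj1
      · rw [hEpow, mul_one] at hgj2
        exact (hE1 j).mp hgj2
    · intro hj
      have e1 : E c ^ j = 1 := by rw [hEpow]; exact (hE1 _).mpr (hj.mul_right c)
      have e2 : E d ^ j = 1 := by rw [hEpow]; exact (hE1 _).mpr (hj.mul_right d)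
      exact Prod.ext e1 e2
  have horder : orderOf g = N := by
    apply Nat.dvd_antisymm
    · apply orderOf_dvd_of_pow_eq_one
      have h9 : g ^ ((N : ℤ)) = 1 := by
        rw [hgpow, ← hNabs]
        exact Int.dvd_natAbs.mpr dvd_rfl
      rwa [zpow_natCast] at h9
    · have h1 : g ^ ((orderOf g : ℤ)) = 1 := by
        rw [zpow_natCast]; exact pow_orderOf_eq_one g
      have h2 : 2 * k ∣ (orderOf g : ℤ) := (hgpow _).mp h1
      have h3 := Int.natAbs_dvd_natAbs.mpr h2
      rwa [hNabs, Int.natAbs_natCast] at h3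
  -- cardinality lower bound via the order of g
  have hdvd : N ∣ Nat.card ↥G := by
    have h1 := orderOf_dvd_natCard (⟨g, hgG⟩ : ↥G)
    have h2 := orderOf_injective G.subtype G.subtype_injective ⟨g, hgG⟩
    rw [show G.subtype ⟨g, hgG⟩ = g from rfl, horder] at h2
    exact h2 ▸ h1
  have hcardpos : 0 < Nat.card ↥G := Nat.card_pos
  have hcard : Nat.card ↥G = N := by
    have hle : N ≤ Nat.card ↥G := Nat.le_of_dvd hcardpos hdvd
    omega
  constructor
  · apply isCyclic_of_subgroup_isDomain (R := ℂ)
      ((Units.coeHom ℂ).comp (Circle.toUnits.comp ((torusChar a b).comp G.subtype)))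
    intro x y hxy
    exact hinj x y (htoUnits_inj (Units.ext hxy))
  · exact hcard
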